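/- In the free algebra k⟨x₁,x₂⟩ with bicharacter p (p₂₂=q, p₁₁=q³, p₁₂p₂₁=q⁻³), one has ∂₁([[x₁,x₂],[x₂,[x₂,x₁]]]) = (1−q⁻³)·[x₂,[x₂,[x₂,x₁]]], where ∂₁ is the skew derivation with ∂₁(x₁)=1, ∂₁(x₂)=0. -/

import Mathlib

set_option maxHeartbeats 2000000 in
/-- `∂₁([[x₁,x₂],[x₂,[x₂,x₁]]]) = (1−q⁻³)·[x₂,[x₂,[x₂,x₁]]]` in `k⟨x₁,x₂⟩`. -/
theorem stmt14 {k : Type*} [Field k] (q p12 p21 : k) (hq : q ≠ 0)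
    (hp : p12 * p21 = (q ^ 3)⁻¹)
    (x1 x2 B B' T : FreeAlgebra k (Fin 2))
    (hx1 : x1 = FreeAlgebra.ι k (0 : Fin 2)) (hx2 : x2 = FreeAlgebra.ι k (1 : Fin 2))
    (hB : B = x1 * x2 - p12 • (x2 * x1))
    (hB' : B' = x2 * x1 - p21 • (x1 * x2))
    (hT : T = x2 * B' - (q * p21) • (B' * x2))
    (d1 : FreeAlgebra k (Fin 2) →ₗ[k] FreeAlgebra k (Fin 2))
    (hd1one : d1 1 = 0)
    (hd1x1 : d1 x1 = 1) (hd1x2 : d1 x2 = 0)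
    (hL1x1 : ∀ v, d1 (x1 * v) = v + q ^ 3 • (x1 * d1 v))
    (hL1x2 : ∀ v, d1 (x2 * v) = p21 • (x2 * d1 v)) :
    d1 (B * T - (q ^ 3 * p12 ^ 2 * p21 * q ^ 2) • (T * B))
      = (1 - (q ^ 3)⁻¹) • (x2 * T - (q ^ 2 * p21) • (T * x2)) := by
  have hq3 : (q : k) ^ 3 ≠ 0 := pow_ne_zero _ hq
  have hp21 : p21 ≠ 0 := by
    intro h; rw [h, mul_zero] at hp; exact (hq3 (inv_eq_zero.mp hp.symm)).elim
  have hp12 : p12 = (q ^ 3)⁻¹ * p21⁻¹ := by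
    field_simp at hp ⊢; linear_combination hp
  have hc : ∀ (a : k), a ≠ 0 → ∀ n : ℕ, a ^ n * a⁻¹ ^ n = 1 := fun a h n => by
    rw [inv_pow, mul_inv_cancel₀ (pow_ne_zero n h)]
  subst hT hB hB'
  simp only [mul_sub, sub_mul, smul_mul_assoc, mul_smul_comm, smul_sub, smul_smul, mul_assoc]
  simp only [map_sub, map_add, map_smul, hL1x1, hL1x2, hd1x1, hd1x2, smul_zero, mul_zero,
    mul_one, smul_smul, mul_smul_comm, smul_add, add_zero, zero_add]
  simp only [mul_add, add_mul, mul_sub, sub_mul, smul_mul_assoc, mul_smul_comm, smul_sub,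
    smul_add, smul_smul, mul_assoc]
  subst hp12
  match_scalars
  all_goals try (field_simp; ring)
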